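/- A monotone function f : ℕ∞ → ℕ∞ is the production function ⟦σ⟧ of some io-sequence σ if and only if f is continuous (f(∞) = sup_{n∈ℕ} f(n)) — equivalently, the io-sequence production functions are exactly the monotone ω-continuous functions ℕ∞ → ℕ∞. Moreover, σ can be chosen canonically (shortest in each prefix) and is then unique. -/

import Mathlib

open scoped Classical

/-- Production of a finite io-word (`true` = '+' output, `false` = '−' input)
on a finite input budget. -/
def prodList : List Bool → ℕ → ℕ
  | [], _ => 0
  | true :: l, n => 1 + prodList l n
  | false :: _, 0 => 0
  | false :: l, n + 1 => prodList l n

/-- The production function ⟦σ⟧ : ℕ∞ → ℕ∞ of an io-sequence σ (a finite or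
infinite word over {−,+}), obtained as the supremum over finite prefixes of σ
and finite budgets below the argument. -/
noncomputable def prodSeq (σ : Stream'.Seq Bool) (n : ℕ∞) : ℕ∞ :=
  ⨆ (k : ℕ) (m : ℕ) (_ : (m : ℕ∞) ≤ n), (prodList (σ.take k) m : ℕ∞)

/-- ω-continuity (together with monotonicity) on the ω-cpo ℕ∞. -/
def NEContinuous (f : ℕ∞ → ℕ∞) : Prop :=
  Monotone f ∧ ∀ c : ℕ → ℕ∞, Monotone c → f (⨆ k, c k) = ⨆ k, f (c k)

/-- Rational (eventually periodic, possibly finite) io-sequences. -/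
def RationalSeq (σ : Stream'.Seq Bool) : Prop :=
  (∃ l : List Bool, σ = Stream'.Seq.ofList l) ∨
  ∃ (u v : List Bool) (h : v ≠ []),
    σ = (Stream'.Seq.ofList u).append (Stream'.Seq.ofStream (Stream'.cycle v h))

/-- Periodically increasing functions on ℕ∞: monotone, ω-continuous,
determined at ∞ by the finite values, and eventually linear-periodic. -/
def PerInc (f : ℕ∞ → ℕ∞) : Prop :=
  Monotone f ∧
  (∀ c : ℕ → ℕ∞, Monotone c → f (⨆ k, c k) = ⨆ k, f (c k)) ∧
  (f ⊤ = ⨆ n : ℕ, f n) ∧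
  ∃ N p q : ℕ, 1 ≤ p ∧ ∀ n : ℕ, N ≤ n → f ((n : ℕ∞) + (p : ℕ∞)) = f n + (q : ℕ∞)

open Stream'.Seq

namespace IOAux


lemma prodList_mono_budget : ∀ (l : List Bool) {m m' : ℕ}, m ≤ m' →
    prodList l m ≤ prodList l m'
  | [], _, _, _ => le_rfl
  | true :: l, m, m', h => by
      simpa [prodList] using prodList_mono_budget l h
  | false :: l, 0, m', _ => by simp [prodList]
  | false :: l, m+1, m'+1, h => by
      simpa [prodList] using prodList_mono_budget l (Nat.succ_le_succ_iff.mp h)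

lemma prodList_le_count_true : ∀ (l : List Bool) (m : ℕ),
    prodList l m ≤ l.count true
  | [], _ => le_rfl
  | true :: l, m => by
      have := prodList_le_count_true l m
      simp [prodList, List.count_cons]; omega
  | false :: l, 0 => by simp [prodList]
  | false :: l, m+1 => by
      simpa [prodList, List.count_cons] using prodList_le_count_true l m

lemma prodList_count_false : ∀ (l : List Bool),
    prodList l (l.count false) = l.count true
  | [] => rfl
  | true :: l => by simp [prodList, List.count_cons, prodList_count_false l, Nat.add_comm]
  | false :: l => by simp [prodList, List.count_cons, prodList_count_false l]

lemma count_true_add_count_false : ∀ (l : List Bool),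
    l.count true + l.count false = l.length
  | [] => rfl
  | b :: l => by
      have := count_true_add_count_false l
      cases b <;> simp [List.count_cons] <;> omega

/-- take (j+1) s = take j s ++ (s.get? j).toList -/
lemma take_succ_eq (s : Stream'.Seq Bool) : ∀ (j : ℕ),
    s.take (j+1) = s.take j ++ (s.get? j).toList := by
  intro j
  induction j generalizing s with
  | zero =>
      rcases h : destruct s with _ | ⟨x, r⟩
      · have : s = nil := destruct_eq_none h
        subst this; simp [take]
      · have : s = cons x r := destruct_eq_cons h
        subst this; simp [take, destruct_cons]
  | succ j ih =>
      rcases h : destruct s with _ | ⟨x, r⟩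
      · have : s = nil := destruct_eq_none h
        subst this; simp [take]
      · have : s = cons x r := destruct_eq_cons h
        subst this
        show take (j+2) (cons x r) = take (j+1) (cons x r) ++ _
        have h1 : take (j+2) (cons x r) = x :: take (j+1) r := by
          simp [take, destruct_cons]
        have h2 : take (j+1) (cons x r) = x :: take j r := by
          simp [take, destruct_cons]
        rw [h1, h2, ih r, get?_cons_succ]
        simp

lemma count_take_mono (s : Stream'.Seq Bool) (c : Bool) :
    Monotone (fun j => (s.take j).count c) := by
  apply monotone_nat_of_le_succ
  intro j
  simp only [take_succ_eq, List.count_append]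
  omega

lemma count_take_dead (s : Stream'.Seq Bool) {j : ℕ} (h : s.get? j = none)
    (c : Bool) (k : ℕ) : (s.take k).count c ≤ (s.take j).count c := by
  rcases le_or_gt k j with hk | hk
  · exact count_take_mono s c hk
  · have : ∀ d, (s.take (j + d)).count c = (s.take j).count c := by
      intro d
      induction d with
      | zero => rfl
      | succ d ih =>
          rw [← Nat.add_assoc, take_succ_eq, s.le_stable (Nat.le_add_right j d) h]
          simpa using ih
    rw [← Nat.add_sub_cancel' hk.le, this]

lemma length_take_of_get? (s : Stream'.Seq Bool) :
    ∀ (j : ℕ) {b}, s.get? j = some b → (s.take j).length = j := by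
  intro j
  induction j with
  | zero => intro b _; rfl
  | succ j ih =>
      intro b h
      rcases hj : s.get? j with _ | b'
      · rw [s.le_stable (Nat.le_succ j) hj] at h; exact absurd h (by simp)
      · rw [take_succ_eq, List.length_append, ih hj, hj]; simp


variable (f : ℕ∞ → ℕ∞)


noncomputable def canonStep (s : ℕ × ℕ) : ℕ × ℕ :=
  if ((s.2 : ℕ∞) + 1 ≤ f s.1) then (s.1, s.2 + 1)
  else if ((s.2 : ℕ∞) < f ⊤) then (s.1 + 1, s.2) else s

noncomputable def canonBit (s : ℕ × ℕ) : Option Bool :=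
  if ((s.2 : ℕ∞) + 1 ≤ f s.1) then some true
  else if ((s.2 : ℕ∞) < f ⊤) then some false else none

lemma canonStep_of_none' {s : ℕ × ℕ} (h : canonBit f s = none) : canonStep f s = s := by
  unfold canonBit at h
  unfold canonStep
  split_ifs at h ⊢ <;> simp_all

noncomputable def canonSeq (s : ℕ × ℕ) : Stream'.Seq Bool :=
  ⟨fun j => canonBit f ((canonStep f)^[j] s), by
    intro n h
    simp only [Function.iterate_succ_apply']
    rwa [canonStep_of_none' f h]⟩




lemma canonSeq_get? (s : ℕ × ℕ) (j : ℕ) :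
    (canonSeq f s).get? j = canonBit f ((canonStep f)^[j] s) := rfl

lemma canonSeq_tail (s : ℕ × ℕ) :
    (canonSeq f s).tail = canonSeq f (canonStep f s) := by
  apply Stream'.Seq.ext
  intro n
  rw [get?_tail, canonSeq_get?, canonSeq_get?, Function.iterate_succ_apply]

lemma canonSeq_take_succ (s : ℕ × ℕ) (k : ℕ) :
    (canonSeq f s).take (k+1) =
      match canonBit f s with
      | none => []
      | some b => b :: (canonSeq f (canonStep f s)).take k := by
  show Stream'.Seq.take (k+1) _ = _
  rcases h : canonBit f s with _ | b
  · unfold Stream'.Seq.take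
    have hd : destruct (canonSeq f s) = none := by
      unfold destruct
      have : (canonSeq f s).get? 0 = none := h
      rw [this]; rfl
    rw [hd]
  · unfold Stream'.Seq.take
    have hd : destruct (canonSeq f s) = some (b, canonSeq f (canonStep f s)) := by
      unfold destruct
      have : (canonSeq f s).get? 0 = some b := h
      rw [this, ← canonSeq_tail]; rfl
    rw [hd]
    cases k <;> rfl


lemma boundA (hmono : Monotone f) : ∀ (k i o m : ℕ), (o : ℕ∞) ≤ f i →
    (↑(o + prodList ((canonSeq f (i, o)).take k) m) : ℕ∞) ≤ f (i + m : ℕ) := by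
  intro k
  induction k with
  | zero =>
      intro i o m ho
      simpa [Stream'.Seq.take, prodList] using
        ho.trans (hmono (by exact_mod_cast Nat.cast_le.2 (Nat.le_add_right i m)))
  | succ k ih =>
      intro i o m ho
      rw [canonSeq_take_succ]
      unfold canonBit canonStep
      split_ifs with h1 h2
      · -- emits true
        have := ih i (o+1) m (by exact_mod_cast h1)
        simp only [prodList]
        calc (↑(o + (1 + prodList ((canonSeq f (i, o+1)).take k) m)) : ℕ∞)
            = ↑((o+1) + prodList ((canonSeq f (i, o+1)).take k) m) := by
              norm_cast; omega
          _ ≤ _ := this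
      · -- emits false
        rcases m with _ | m
        · simpa [prodList] using ho.trans (hmono le_rfl)
        · have hi1 : (o : ℕ∞) ≤ f (i+1 : ℕ) :=
            ho.trans (hmono (by exact_mod_cast Nat.cast_le.2 (Nat.le_succ i)))
          have := ih (i+1) o m hi1
          simp only [prodList]
          calc (↑(o + prodList ((canonSeq f (i+1, o)).take k) m) : ℕ∞)
              ≤ f ((i+1) + m : ℕ) := this
            _ = f (i + (m+1) : ℕ) := by ring_nf
      · -- terminated
        simpa [prodList] using
          ho.trans (hmono (by exact_mod_cast Nat.cast_le.2 (Nat.le_add_right i m)))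

lemma boundB (hmono : Monotone f) : ∀ (n x m i o : ℕ), x - o + m ≤ n → (o : ℕ∞) ≤ f i →
    (x : ℕ∞) ≤ f (i + m : ℕ) →
    ∃ k, x ≤ o + prodList ((canonSeq f (i, o)).take k) m := by
  intro n
  induction n with
  | zero =>
      intro x m i o hn ho hx
      refine ⟨0, ?_⟩
      have : x - o = 0 := by omega
      simp [Stream'.Seq.take, prodList]; omega
  | succ n ih =>
      intro x m i o hn ho hx
      by_cases hxo : x ≤ o
      · exact ⟨0, by simp [Stream'.Seq.take, prodList]; omega⟩
      push_neg at hxo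
      by_cases h1 : (o : ℕ∞) + 1 ≤ f i
      · -- canonical emits true
        have ho' : ((o+1 : ℕ) : ℕ∞) ≤ f i := by exact_mod_cast h1
        obtain ⟨k, hk⟩ := ih x m i (o+1) (by omega) ho' hx
        refine ⟨k+1, ?_⟩
        rw [canonSeq_take_succ]
        unfold canonBit
        rw [if_pos h1]
        show x ≤ o + prodList (true :: _) m
        have hstep : canonStep f (i, o) = (i, o+1) := by unfold canonStep; rw [if_pos h1]
        rw [hstep]
        simp only [prodList]; omega
      · -- f i ≤ o
        have hfio : f i ≤ (o : ℕ∞) := by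
          have := (ENat.lt_add_one_iff (n := (o:ℕ∞)) (by simp)).1 (not_le.1 h1)
          exact this
        rcases m with _ | m
        · exfalso
          have : (x : ℕ∞) ≤ (o : ℕ∞) := by
            calc (x:ℕ∞) ≤ f (i + 0 : ℕ) := hx
              _ = f i := by norm_num
              _ ≤ o := hfio
          exact absurd (Nat.cast_le.1 this) (by omega)
        · have h2 : (o : ℕ∞) < f ⊤ := by
            calc (o:ℕ∞) < x := by exact_mod_cast hxo
              _ ≤ f (i + (m+1) : ℕ) := hx
              _ ≤ f ⊤ := hmono le_top
          have ho1 : (o : ℕ∞) ≤ f (i+1 : ℕ) :=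
            ho.trans (hmono (by exact_mod_cast Nat.cast_le.2 (Nat.le_succ i)))
          have hx1 : (x : ℕ∞) ≤ f ((i+1) + m : ℕ) := by
            convert hx using 3; omega
          obtain ⟨k, hk⟩ := ih x m (i+1) o (by omega) ho1 hx1
          refine ⟨k+1, ?_⟩
          rw [canonSeq_take_succ]
          unfold canonBit
          rw [if_neg h1, if_pos h2]
          show x ≤ o + prodList (false :: _) (m+1)
          have hstep : canonStep f (i, o) = (i+1, o) := by
            unfold canonStep; rw [if_neg h1, if_pos h2]
          rw [hstep]
          simpa [prodList] using hk

lemma stateCounts : ∀ (j : ℕ) (s : ℕ × ℕ),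
    (canonStep f)^[j] s =
      (s.1 + ((canonSeq f s).take j).count false,
       s.2 + ((canonSeq f s).take j).count true) := by
  intro j
  induction j with
  | zero => intro s; simp [Stream'.Seq.take]
  | succ j ih =>
      intro s
      rw [Function.iterate_succ_apply', ih s, take_succ_eq, canonSeq_get?, ih s]
      rcases hb : canonBit f (s.1 + (List.count false (take j (canonSeq f s))),
          s.2 + (List.count true (take j (canonSeq f s)))) with _ | b
      · rw [canonStep_of_none' f hb]
        simp
      · unfold canonBit at hb
        unfold canonStep
        split_ifs at hb ⊢ with h1 h2
        · cases b
          · exact absurd hb (by simp)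
          · simp [Prod.ext_iff, List.count_append]
            omega
        · cases b
          · simp [Prod.ext_iff, List.count_append]
            omega
          · exact absurd hb (by simp)

lemma canonInv (hmono : Monotone f) : ∀ (j : ℕ) (s : ℕ × ℕ), ((s.2 : ℕ∞) ≤ f s.1) →
    (((((canonStep f)^[j] s).2 : ℕ) : ℕ∞) ≤ f ((canonStep f)^[j] s).1) := by
  intro j
  induction j with
  | zero => intro s hs; exact hs
  | succ j ih =>
      intro s hs
      rw [Function.iterate_succ_apply']
      have h := ih s hs
      set t := (canonStep f)^[j] s with ht
      unfold canonStep
      split_ifs with h1 h2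
      · exact_mod_cast h1
      · exact h.trans (hmono (by exact_mod_cast Nat.cast_le.2 (Nat.le_succ t.1)))
      · exact h


lemma le_of_forall_nat {a b : ℕ∞} (h : ∀ x : ℕ, (x : ℕ∞) ≤ a → (x : ℕ∞) ≤ b) :
    a ≤ b := by
  induction a using ENat.recTopCoe with
  | top =>
      induction b using ENat.recTopCoe with
      | top => exact le_rfl
      | coe n =>
          have := h (n+1) le_top
          have : n + 1 ≤ n := by exact_mod_cast this
          omega
  | coe n => exact h n le_rfl

lemma le_prodSeq (σ : Stream'.Seq Bool) (k m : ℕ) (n : ℕ∞) (h : (m : ℕ∞) ≤ n) :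
    (prodList (σ.take k) m : ℕ∞) ≤ prodSeq σ n :=
  le_iSup_of_le k (le_iSup_of_le m (le_iSup_of_le h le_rfl))

lemma prodSeq_le (σ : Stream'.Seq Bool) (n : ℕ∞) (c : ℕ∞)
    (h : ∀ k m : ℕ, (m : ℕ∞) ≤ n → (prodList (σ.take k) m : ℕ∞) ≤ c) :
    prodSeq σ n ≤ c :=
  iSup_le fun k => iSup_le fun m => iSup_le fun hm => h k m hm

lemma canon_computes (f : ℕ∞ → ℕ∞) (hmono : Monotone f)
    (hcont : f ⊤ = ⨆ n : ℕ, f n) :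
    ∀ n : ℕ∞, prodSeq (canonSeq f (0, 0)) n = f n := by
  have h0 : ((0:ℕ) : ℕ∞) ≤ f 0 := zero_le
  have hfin : ∀ m : ℕ, prodSeq (canonSeq f (0, 0)) m = f m := by
    intro m
    apply le_antisymm
    · apply prodSeq_le
      intro k m' hm'
      have := boundA f hmono k 0 0 m' h0
      simp only [Nat.zero_add] at this
      exact this.trans (hmono hm')
    · apply le_of_forall_nat
      intro x hx
      obtain ⟨k, hk⟩ := boundB f hmono (x + m) x m 0 0 (by omega) h0
        (by simpa using hx)
      simp only [Nat.zero_add] at hk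
      calc (x : ℕ∞) ≤ (prodList ((canonSeq f (0,0)).take k) m : ℕ∞) := by
            exact_mod_cast hk
        _ ≤ _ := le_prodSeq _ k m m le_rfl
  intro n
  induction n using ENat.recTopCoe with
  | top =>
      apply le_antisymm
      · apply prodSeq_le
        intro k m _
        have := boundA f hmono k 0 0 m h0
        simp only [Nat.zero_add] at this
        exact this.trans (hmono le_top)
      · rw [hcont]
        apply iSup_le
        intro n
        rw [← hfin n]
        apply prodSeq_le
        intro k m hm
        exact le_prodSeq _ k m ⊤ le_top
  | coe m => exact hfin m

lemma computes_imp_cont (f : ℕ∞ → ℕ∞) (hmono : Monotone f)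
    (σ : Stream'.Seq Bool) (hσ : ∀ n : ℕ∞, prodSeq σ n = f n) :
    f ⊤ = ⨆ n : ℕ, f n := by
  apply le_antisymm
  · rw [← hσ ⊤]
    apply prodSeq_le
    intro k m _
    calc (prodList (σ.take k) m : ℕ∞) ≤ prodSeq σ m := le_prodSeq _ k m m le_rfl
      _ = f m := hσ m
      _ ≤ ⨆ n : ℕ, f n := le_iSup (fun n : ℕ => f n) m
  · exact iSup_le fun n => hmono le_top

lemma dead_bound (f : ℕ∞ → ℕ∞) (τ : Stream'.Seq Bool)
    (hτ : ∀ n : ℕ∞, prodSeq τ n = f n) {j : ℕ} (hdead : τ.get? j = none) :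
    f ⊤ ≤ ((τ.take j).count true : ℕ∞) := by
  rw [← hτ ⊤]
  apply prodSeq_le
  intro k m _
  exact_mod_cast Nat.cast_le.2
    ((prodList_le_count_true _ m).trans (count_take_dead τ hdead true k))

lemma T1 (f : ℕ∞ → ℕ∞) (τ : Stream'.Seq Bool)
    (hτ : ∀ n : ℕ∞, prodSeq τ n = f n) (i : ℕ) :
    ((τ.take i).count true : ℕ∞) ≤ f ((τ.take i).count false : ℕ) := by
  have h := le_prodSeq τ i ((τ.take i).count false)
    (((τ.take i).count false : ℕ) : ℕ∞) le_rfl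
  rwa [prodList_count_false, hτ] at h

lemma canon_max (f : ℕ∞ → ℕ∞) (hmono : Monotone f) (τ : Stream'.Seq Bool)
    (hτ : ∀ n : ℕ∞, prodSeq τ n = f n) (j : ℕ) :
    (τ.take j).count true ≤ ((canonSeq f (0,0)).take j).count true ∧
    ((canonSeq f (0,0)).take j).count false ≤ (τ.take j).count false := by
  induction j with
  | zero => exact ⟨le_rfl, le_rfl⟩
  | succ j ih =>
      obtain ⟨hoo, hii⟩ := ih
      set σ := canonSeq f (0,0) with hσdef
      have hstate : (canonStep f)^[j] (0,0) =
          ((σ.take j).count false, (σ.take j).count true) := by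
        rw [stateCounts f j (0,0), ← hσdef]
        simp only [Nat.zero_add]
      have hbit : σ.get? j =
          canonBit f ((σ.take j).count false, (σ.take j).count true) := by
        rw [hσdef, canonSeq_get?, hstate]
      have hInv : (((σ.take j).count true : ℕ) : ℕ∞) ≤
          f (((σ.take j).count false : ℕ) : ℕ∞) := by
        have h := canonInv f hmono j (0,0) (by simp)
        rwa [hstate] at h
      have hT1j := T1 f τ hτ (j+1)
      rw [take_succ_eq τ j, List.count_append, List.count_append] at hT1j
      have hlen : ∀ s : Stream'.Seq Bool, ∀ b, s.get? j = some b →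
          (s.take j).count true + (s.take j).count false = j := by
        intro s b hb
        rw [count_true_add_count_false, length_take_of_get? s j hb]
      rw [take_succ_eq σ j, take_succ_eq τ j, hbit, List.count_append,
        List.count_append, List.count_append, List.count_append]
      rcases hTg : τ.get? j with _ | bτ
      · -- τ is dead at j
        unfold canonBit
        split_ifs with h1 h2
        · refine ⟨?_, ?_⟩ <;> simp [Option.toList] <;> omega
        · -- σ emits false but τ dead: contradiction
          exfalso
          have hd := dead_bound f τ hτ hTg
          have : f ⊤ ≤ (((σ.take j).count true : ℕ) : ℕ∞) :=
            hd.trans (by exact_mod_cast Nat.cast_le.2 hoo)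
          exact absurd (h2.trans_le this) (by simp)
        · refine ⟨?_, ?_⟩ <;> simp [Option.toList] <;> omega
      · -- τ has a j-th element
        cases bτ with
        | false =>
            unfold canonBit
            split_ifs with h1 h2 <;> refine ⟨?_, ?_⟩ <;>
              simp [Option.toList] <;> omega
        | true =>
            have hT1' : (((τ.take j).count true + 1 : ℕ) : ℕ∞) ≤
                f (((τ.take j).count false : ℕ) : ℕ∞) := by
              rw [hTg] at hT1j
              simpa [Option.toList] using hT1j
            unfold canonBit
            split_ifs with h1 h2
            · -- σ emits true
              refine ⟨?_, ?_⟩ <;> simp [Option.toList] <;> omega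
            · -- σ emits false
              have hfio : f (((σ.take j).count false : ℕ) : ℕ∞) ≤
                  (((σ.take j).count true : ℕ) : ℕ∞) :=
                (ENat.lt_add_one_iff (by simp)).1 (not_le.1 h1)
              have hbitσ : σ.get? j = some false := by
                rw [hbit]
                unfold canonBit
                rw [if_neg h1, if_pos h2]
              have hlσ := hlen σ false hbitσ
              have hlτ := hlen τ true hTg
              by_cases hEq : (τ.take j).count false = (σ.take j).count false
              · exfalso
                have hoeq : (τ.take j).count true = (σ.take j).count true := by omega
                have hc : (((τ.take j).count true + 1 : ℕ) : ℕ∞) ≤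
                    (((τ.take j).count true : ℕ) : ℕ∞) := by
                  refine hT1'.trans ?_
                  rw [hEq]
                  exact hfio.trans (by exact_mod_cast hoeq.symm.le)
                have := Nat.cast_le.1 hc
                omega
              · refine ⟨?_, ?_⟩ <;> simp [Option.toList] <;> omega
            · -- σ is dead
              have hftop : f ⊤ ≤ (((σ.take j).count true : ℕ) : ℕ∞) := not_lt.1 h2
              have hc : (((τ.take j).count true + 1 : ℕ) : ℕ∞) ≤
                  (((σ.take j).count true : ℕ) : ℕ∞) :=
                hT1'.trans ((hmono le_top).trans hftop)
              have := Nat.cast_le.1 hc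
              refine ⟨?_, ?_⟩ <;> simp [Option.toList] <;> omega

lemma eq_of_counts (s t : Stream'.Seq Bool)
    (h : ∀ j, (s.take j).count true = (t.take j).count true ∧
      (s.take j).count false = (t.take j).count false) : s = t := by
  apply Stream'.Seq.ext
  intro n
  have h1 := h n
  have h2 := h (n+1)
  rw [take_succ_eq s n, take_succ_eq t n, List.count_append, List.count_append,
    List.count_append, List.count_append] at h2
  have e1 : ((s.get? n).toList.count true) = ((t.get? n).toList.count true) := by omega
  have e2 : ((s.get? n).toList.count false) = ((t.get? n).toList.count false) := by omega
  have key : ∀ o o' : Option Bool, o.toList.count true = o'.toList.count true →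
      o.toList.count false = o'.toList.count false → o = o' := by decide
  exact key _ _ e1 e2

end IOAux

open IOAux in
theorem prod_functions_are_continuous_functions (f : ℕ∞ → ℕ∞)
    (hmono : Monotone f) :
    ((∃ σ : Stream'.Seq Bool, ∀ n : ℕ∞, prodSeq σ n = f n) ↔
      f ⊤ = ⨆ n : ℕ, f n) ∧
    (f ⊤ = (⨆ n : ℕ, f n) →
      ∃! σ : Stream'.Seq Bool,
        (∀ n : ℕ∞, prodSeq σ n = f n) ∧
        ∀ τ : Stream'.Seq Bool, (∀ n : ℕ∞, prodSeq τ n = f n) →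
          ∀ j : ℕ,
            (Stream'.Seq.take j τ).count true ≤ (Stream'.Seq.take j σ).count true ∧
            (Stream'.Seq.take j σ).count false ≤ (Stream'.Seq.take j τ).count false) := by
  constructor
  · constructor
    · rintro ⟨σ, hσ⟩
      exact computes_imp_cont f hmono σ hσ
    · intro hcont
      exact ⟨canonSeq f (0,0), canon_computes f hmono hcont⟩
  · intro hcont
    refine ⟨canonSeq f (0,0), ⟨canon_computes f hmono hcont,
      fun τ hτ j => canon_max f hmono τ hτ j⟩, ?_⟩
    rintro τ₀ ⟨hτ₀, hdom⟩
    apply eq_of_counts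
    intro j
    have h1 := canon_max f hmono τ₀ hτ₀ j
    have h2 := hdom (canonSeq f (0,0)) (canon_computes f hmono hcont) j
    exact ⟨le_antisymm h1.1 h2.1, le_antisymm h2.2 h1.2⟩
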